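/- Let r, s, t ≥ 0 satisfy min(r,s) > t and r + s > 1/2 + t. Then there exists a constant C > 0 such that for every 2π-periodic function f ∈ H^r and every square-integrable 2π-periodic function g, the pointwise product fg satisfies ‖fg‖_{−s} ≤ C ‖f‖_r ‖g‖_{−t}, with C independent of f and g. (This is the dual Sobolev product estimate, obtained by duality from ‖fg‖_t ≲ ‖f‖_r ‖g‖_s.) -/

import Mathlib

open MeasureTheory Real AddCircle

open ENNReal ComplexConjugate Filter

set_option linter.unusedSectionVars false
set_option linter.unusedVariables false





noncomputable section SeqAux

def eV (k : ℤ) : ℝ≥0∞ := ENNReal.ofReal (1 + (k : ℝ) ^ 2)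

lemma one_le_eV (k : ℤ) : 1 ≤ eV k := by
  rw [eV, ← ENNReal.ofReal_one]
  exact ENNReal.ofReal_le_ofReal (by nlinarith [sq_nonneg ((k:ℝ))])

lemma eV_ne_zero (k : ℤ) : eV k ≠ 0 := by
  intro h; simpa [h] using one_le_eV k

lemma eV_ne_top (k : ℤ) : eV k ≠ ⊤ := ENNReal.ofReal_ne_top

lemma eV_rpow_ne_top (k : ℤ) (c : ℝ) : eV k ^ c ≠ ⊤ := by
  rw [Ne, ENNReal.rpow_eq_top_iff]
  push_neg
  exact ⟨fun h => absurd h (eV_ne_zero k), fun h => absurd h (eV_ne_top k)⟩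

lemma eV_rpow_ne_zero (k : ℤ) (c : ℝ) : eV k ^ c ≠ 0 := by
  rw [Ne, ENNReal.rpow_eq_zero_iff]
  push_neg
  exact ⟨fun h => absurd h (eV_ne_zero k), fun h => absurd h (eV_ne_top k)⟩

lemma eV_rpow_add (k : ℤ) (c d : ℝ) : eV k ^ (c + d) = eV k ^ c * eV k ^ d :=
  ENNReal.rpow_add _ _ (eV_ne_zero k) (eV_ne_top k)

lemma eV_mono {k m : ℤ} (h : k.natAbs ≤ m.natAbs) : eV k ≤ eV m := by
  refine ENNReal.ofReal_le_ofReal ?_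
  have h2 : ((k.natAbs : ℝ)) ^ 2 ≤ ((m.natAbs : ℝ)) ^ 2 := by
    have := (Nat.cast_le (α := ℝ)).2 h
    nlinarith [Nat.cast_nonneg (α := ℝ) k.natAbs]
  have ek : ((k.natAbs : ℝ)) ^ 2 = (k : ℝ) ^ 2 := by
    push_cast [Nat.cast_natAbs]
    rw [sq_abs]
  have em : ((m.natAbs : ℝ)) ^ 2 = (m : ℝ) ^ 2 := by
    push_cast [Nat.cast_natAbs]
    rw [sq_abs]
  nlinarith

lemma eV_rpow_antitone {k m : ℤ} {c : ℝ} (hc : 0 ≤ c) (h : eV k ≤ eV m) :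
    eV m ^ (-c) ≤ eV k ^ (-c) := by
  rw [ENNReal.rpow_neg, ENNReal.rpow_neg]
  exact ENNReal.inv_le_inv.2 (ENNReal.rpow_le_rpow h hc)

/-- Peetre-type inequality. -/
lemma eV_sub_le (k m : ℤ) : eV (k - m) ≤ 4 * max (eV k) (eV m) := by
  have h4 : (4 : ℝ≥0∞) = ENNReal.ofReal 4 := by norm_num
  rcases le_total ((k:ℝ)^2) ((m:ℝ)^2) with h | h
  · calc eV (k - m) ≤ 4 * eV m := by
          rw [eV, eV, h4, ← ENNReal.ofReal_mul (by norm_num)]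
          refine ENNReal.ofReal_le_ofReal ?_
          push_cast
          nlinarith [sq_nonneg ((k:ℝ) + m), sq_nonneg ((k:ℝ) - m)]
    _ ≤ 4 * max (eV k) (eV m) := by gcongr; exact le_max_right _ _
  · calc eV (k - m) ≤ 4 * eV k := by
          rw [eV, eV, h4, ← ENNReal.ofReal_mul (by norm_num)]
          refine ENNReal.ofReal_le_ofReal ?_
          push_cast
          nlinarith [sq_nonneg ((k:ℝ) + m), sq_nonneg ((k:ℝ) - m)]
    _ ≤ 4 * max (eV k) (eV m) := by gcongr; exact le_max_left _ _

lemma eV_sub_rpow_le (k m : ℤ) {c : ℝ} (hc : 0 ≤ c) :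
    eV (k - m) ^ c ≤ (2:ℝ≥0∞) ^ (2*c) * (eV k ^ c + eV m ^ c) := by
  calc eV (k - m) ^ c ≤ (4 * max (eV k) (eV m)) ^ c :=
        ENNReal.rpow_le_rpow (eV_sub_le k m) hc
  _ = (4:ℝ≥0∞) ^ c * max (eV k) (eV m) ^ c := by
        rw [ENNReal.mul_rpow_of_nonneg _ _ hc]
  _ ≤ (2:ℝ≥0∞) ^ (2*c) * (eV k ^ c + eV m ^ c) := by
        gcongr
        · rw [show (4:ℝ≥0∞) = (2:ℝ≥0∞) ^ (2:ℝ) by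
            rw [show (2:ℝ) = ((2:ℕ):ℝ) by norm_num, ENNReal.rpow_natCast]; norm_num]
          rw [← ENNReal.rpow_mul]
        · rcases le_total (eV k) (eV m) with h | h
          · rw [max_eq_right h]; exact le_add_self
          · rw [max_eq_left h]; exact le_self_add

end SeqAux



section CS

lemma cs_tsum (a b : ℤ → ℝ≥0∞) :
    (∑' m, a m * b m) ≤ (∑' m, (a m)^2) ^ ((1:ℝ)/2) * (∑' m, (b m)^2) ^ ((1:ℝ)/2) := by
  have hc : Real.HolderConjugate 2 2 := Real.HolderConjugate.two_two
  have h := ENNReal.lintegral_mul_le_Lp_mul_Lq (Measure.count : Measure ℤ) hc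
    (f := a) (g := b) (by measurability) (by measurability)
  rw [lintegral_count, lintegral_count, lintegral_count] at h
  have e : ∀ c : ℤ → ℝ≥0∞, ∑' m, c m ^ (2:ℝ) = ∑' m, c m ^ (2:ℕ) := by
    intro c; refine tsum_congr fun m => ?_
    rw [← ENNReal.rpow_natCast (c m) 2]; norm_num
  rw [e, e] at h
  exact h

lemma cs_tsum_sq (a b : ℤ → ℝ≥0∞) :
    (∑' m, a m * b m)^2 ≤ (∑' m, (a m)^2) * (∑' m, (b m)^2) := by
  calc (∑' m, a m * b m)^2 ≤ ((∑' m, (a m)^2) ^ ((1:ℝ)/2) * (∑' m, (b m)^2) ^ ((1:ℝ)/2))^2 := by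
        gcongr; exact cs_tsum a b
  _ = _ := by
        rw [mul_pow, ← ENNReal.rpow_natCast (_ ^ ((1:ℝ)/2)) 2, ← ENNReal.rpow_natCast
          ((∑' m, (b m)^2) ^ ((1:ℝ)/2)) 2, ← ENNReal.rpow_mul, ← ENNReal.rpow_mul]
        norm_num

lemma sq_add_le (x y : ℝ≥0∞) : (x + y)^2 ≤ 4 * ((x:ℝ≥0∞)^2 + y^2) := by
  have : x + y ≤ 2 * max x y := by
    rcases le_total x y with h | h
    · rw [max_eq_right h, two_mul]; exact add_le_add h le_rfl
    · rw [max_eq_left h, two_mul]; exact add_le_add le_rfl h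
  calc (x + y)^2 ≤ (2 * max x y)^2 := by gcongr
  _ = 4 * (max x y)^2 := by rw [mul_pow]; norm_num
  _ ≤ 4 * (x^2 + y^2) := by
    gcongr
    rcases le_total x y with h | h
    · rw [max_eq_right h]; exact le_add_self
    · rw [max_eq_left h]; exact le_self_add

end CS

lemma rpow_sq (x : ℝ≥0∞) (c : ℝ) : (x ^ c) ^ 2 = x ^ (2 * c) := by
  rw [mul_comm, ENNReal.rpow_mul, ← ENNReal.rpow_natCast (x ^ c) 2]
  norm_num

lemma eV_rpow_le_one (k : ℤ) {c : ℝ} (hc : 0 ≤ c) : eV k ^ (-c) ≤ 1 := by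
  have : eV k ^ (-c) ≤ eV k ^ (0:ℝ) :=
    ENNReal.rpow_le_rpow_of_exponent_le (one_le_eV k) (by linarith)
  simpa using this

lemma tsum_shift' (b : ℤ → ℝ≥0∞) (k : ℤ) : ∑' m, b (k - m) = ∑' m, b m :=
  (Equiv.subLeft k).tsum_eq b

lemma tsum_shift (b : ℤ → ℝ≥0∞) (m : ℤ) : ∑' k, b (k - m) = ∑' k, b k :=
  (Equiv.subRight m).tsum_eq b

lemma cs_shift (d b : ℤ → ℝ≥0∞) (j : ℤ) :
    (∑' k, d k * b (k - j)) ≤ (∑' k, (d k)^2) ^ ((1:ℝ)/2) * (∑' k, (b k)^2) ^ ((1:ℝ)/2) := by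
  have := cs_tsum d (fun k => b (k - j))
  rwa [tsum_shift (fun k => (b k)^2) j] at this

lemma cs_shift' (a b : ℤ → ℝ≥0∞) (k : ℤ) :
    (∑' m, a m * b (k - m)) ≤ (∑' m, (a m)^2) ^ ((1:ℝ)/2) * (∑' m, (b m)^2) ^ ((1:ℝ)/2) := by
  have := cs_tsum a (fun m => b (k - m))
  rwa [tsum_shift' (fun m => (b m)^2) k] at this

/-- CS against the summable weight. -/
lemma cs_weight (γ : ℝ) (x : ℤ → ℝ≥0∞) :
    (∑' m, eV m ^ (-γ) * x m)
      ≤ (∑' j, eV j ^ (-(2*γ))) ^ ((1:ℝ)/2) * (∑' m, (x m)^2) ^ ((1:ℝ)/2) := by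
  have := cs_tsum (fun m => eV m ^ (-γ)) x
  have e : ∀ m : ℤ, (eV m ^ (-γ))^2 = eV m ^ (-(2*γ)) := by
    intro m; rw [rpow_sq]; ring_nf
  simp_rw [e] at this
  exact this

/-- The key trilinear estimate. -/
lemma trilinear (α β : ℝ) (hα : 0 ≤ α) (hβ : 0 ≤ β) (d a b : ℤ → ℝ≥0∞) :
    (∑' k, ∑' m, d k * (eV k ^ (-α) * eV m ^ (-β) * (a m * b (k - m))))
      ≤ 3 * (∑' j, eV j ^ (-(2*(α+β)))) ^ ((1:ℝ)/2) * (∑' k, (d k)^2) ^ ((1:ℝ)/2)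
        * (∑' m, (a m)^2) ^ ((1:ℝ)/2) * (∑' m, (b m)^2) ^ ((1:ℝ)/2) := by
  set γ := α + β with hγ
  set RZ := (∑' j, eV j ^ (-(2*γ))) ^ ((1:ℝ)/2)
  set RD := (∑' k, (d k)^2) ^ ((1:ℝ)/2)
  set RA := (∑' m, (a m)^2) ^ ((1:ℝ)/2)
  set RB := (∑' m, (b m)^2) ^ ((1:ℝ)/2)
  -- the three dominating terms
  set T1 : ℤ → ℤ → ℝ≥0∞ := fun k m => (eV m ^ (-γ) * a m) * (d k * b (k - m)) with hT1
  set T2 : ℤ → ℤ → ℝ≥0∞ := fun k m => (eV (k-m) ^ (-γ) * b (k - m)) * (d k * a m) with hT2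
  set T3 : ℤ → ℤ → ℝ≥0∞ := fun k m => (eV k ^ (-γ) * d k) * (a m * b (k - m)) with hT3
  have hterm : ∀ k m, d k * (eV k ^ (-α) * eV m ^ (-β) * (a m * b (k - m)))
      ≤ T1 k m + T2 k m + T3 k m := by
    intro k m
    have cover : (m.natAbs ≤ k.natAbs ∧ m.natAbs ≤ (k-m).natAbs)
        ∨ ((k-m).natAbs ≤ k.natAbs ∧ (k-m).natAbs ≤ m.natAbs)
        ∨ (k.natAbs ≤ m.natAbs ∧ k.natAbs ≤ (k-m).natAbs) := by omega
    have key : eV k ^ (-α) * eV m ^ (-β) ≤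
        eV m ^ (-γ) + eV (k-m) ^ (-γ) + eV k ^ (-γ) := by
      rcases cover with ⟨h1, _⟩ | ⟨h1, h2⟩ | ⟨h1, _⟩
      · calc eV k ^ (-α) * eV m ^ (-β) ≤ eV m ^ (-α) * eV m ^ (-β) :=
              mul_le_mul' (eV_rpow_antitone hα (eV_mono h1)) le_rfl
        _ = eV m ^ (-γ) := by rw [← eV_rpow_add, hγ]; ring_nf
        _ ≤ _ := le_trans le_self_add le_self_add
      · calc eV k ^ (-α) * eV m ^ (-β) ≤ eV (k-m) ^ (-α) * eV (k-m) ^ (-β) :=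
              mul_le_mul' (eV_rpow_antitone hα (eV_mono h1)) (eV_rpow_antitone hβ (eV_mono h2))
        _ = eV (k-m) ^ (-γ) := by rw [← eV_rpow_add, hγ]; ring_nf
        _ ≤ _ := le_trans le_add_self le_self_add
      · calc eV k ^ (-α) * eV m ^ (-β) ≤ eV k ^ (-α) * eV k ^ (-β) :=
              mul_le_mul' le_rfl (eV_rpow_antitone hβ (eV_mono h1))
        _ = eV k ^ (-γ) := by rw [← eV_rpow_add, hγ]; ring_nf
        _ ≤ _ := le_add_self
    calc d k * (eV k ^ (-α) * eV m ^ (-β) * (a m * b (k - m)))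
        ≤ d k * ((eV m ^ (-γ) + eV (k-m) ^ (-γ) + eV k ^ (-γ)) * (a m * b (k - m))) :=
          mul_le_mul' le_rfl (mul_le_mul' key le_rfl)
    _ = T1 k m + T2 k m + T3 k m := by simp only [hT1, hT2, hT3]; ring
  calc (∑' k, ∑' m, d k * (eV k ^ (-α) * eV m ^ (-β) * (a m * b (k - m))))
      ≤ ∑' k, ∑' m, (T1 k m + T2 k m + T3 k m) :=
        ENNReal.tsum_le_tsum fun k => ENNReal.tsum_le_tsum fun m => hterm k m
  _ = (∑' k, ∑' m, T1 k m) + (∑' k, ∑' m, T2 k m) + (∑' k, ∑' m, T3 k m) := by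
        simp_rw [ENNReal.tsum_add]
  _ ≤ RZ * RA * (RD * RB) + RZ * RB * (RD * RA) + RZ * RD * (RA * RB) := by
        gcongr
        · -- T1
          rw [ENNReal.tsum_comm]
          calc ∑' m, ∑' k, T1 k m = ∑' m, (eV m ^ (-γ) * a m) * ∑' k, d k * b (k - m) := by
                exact tsum_congr fun m => by rw [hT1, ENNReal.tsum_mul_left]
          _ ≤ ∑' m, (eV m ^ (-γ) * a m) * (RD * RB) :=
                ENNReal.tsum_le_tsum fun m => mul_le_mul' le_rfl (cs_shift d b m)
          _ = (∑' m, eV m ^ (-γ) * a m) * (RD * RB) := ENNReal.tsum_mul_right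
          _ ≤ RZ * RA * (RD * RB) := mul_le_mul' (cs_weight γ a) le_rfl
        · -- T2 : reindex m ↦ j = k - m
          have reind : ∀ k, ∑' m, T2 k m = ∑' j, (eV j ^ (-γ) * b j) * (d k * a (k - j)) := by
            intro k
            have e : ∀ m, T2 k m
                = (fun j => (eV j ^ (-γ) * b j) * (d k * a (k - j))) (k - m) := by
              intro m; simp only [hT2, _root_.sub_sub_cancel]
            calc ∑' m, T2 k m
                = ∑' m, (fun j => (eV j ^ (-γ) * b j) * (d k * a (k - j))) ((Equiv.subLeft k) m) :=
                  tsum_congr e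
            _ = ∑' j, (eV j ^ (-γ) * b j) * (d k * a (k - j)) := by
                  exact (Equiv.subLeft k).tsum_eq (fun j => (eV j ^ (-γ) * b j) * (d k * a (k - j)))
          calc ∑' k, ∑' m, T2 k m = ∑' k, ∑' j, (eV j ^ (-γ) * b j) * (d k * a (k - j)) :=
                tsum_congr reind
          _ = ∑' j, ∑' k, (eV j ^ (-γ) * b j) * (d k * a (k - j)) := ENNReal.tsum_comm
          _ = ∑' j, (eV j ^ (-γ) * b j) * ∑' k, d k * a (k - j) :=
                tsum_congr fun j => ENNReal.tsum_mul_left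
          _ ≤ ∑' j, (eV j ^ (-γ) * b j) * (RD * RA) :=
                ENNReal.tsum_le_tsum fun j => mul_le_mul' le_rfl (cs_shift d a j)
          _ = (∑' j, eV j ^ (-γ) * b j) * (RD * RA) := ENNReal.tsum_mul_right
          _ ≤ RZ * RB * (RD * RA) := mul_le_mul' (cs_weight γ b) le_rfl
        · -- T3
          calc ∑' k, ∑' m, T3 k m = ∑' k, (eV k ^ (-γ) * d k) * ∑' m, a m * b (k - m) :=
                tsum_congr fun k => by rw [hT3, ENNReal.tsum_mul_left]
          _ ≤ ∑' k, (eV k ^ (-γ) * d k) * (RA * RB) :=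
                ENNReal.tsum_le_tsum fun k => mul_le_mul' le_rfl (cs_shift' a b k)
          _ = (∑' k, eV k ^ (-γ) * d k) * (RA * RB) := ENNReal.tsum_mul_right
          _ ≤ RZ * RD * (RA * RB) := mul_le_mul' (cs_weight γ d) le_rfl
  _ = 3 * RZ * RD * RA * RB := by ring

/-- Core weighted bilinear convolution estimate. -/
lemma core_bilinear (α β : ℝ) (hα : 0 ≤ α) (hβ : 0 ≤ β) (a b : ℤ → ℝ≥0∞)
    (ha : ∑' m, (a m)^2 ≠ ⊤) (hb : ∑' m, (b m)^2 ≠ ⊤) :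
    ∑' k, (eV k ^ (-α) * ∑' m, eV m ^ (-β) * (a m * b (k - m)))^2
      ≤ 9 * (∑' j, eV j ^ (-(2*(α+β)))) * (∑' m, (a m)^2) * (∑' m, (b m)^2) := by
  set Z := ∑' j, eV j ^ (-(2*(α+β))) with hZ
  set SA := ∑' m, (a m)^2 with hSA
  set SB := ∑' m, (b m)^2 with hSB
  set c : ℤ → ℝ≥0∞ := fun k => eV k ^ (-α) * ∑' m, eV m ^ (-β) * (a m * b (k - m)) with hc
  -- each c k is finite
  have hck : ∀ k, c k ≤ SA ^ ((1:ℝ)/2) * SB ^ ((1:ℝ)/2) := by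
    intro k
    calc c k ≤ 1 * ∑' m, 1 * (a m * b (k - m)) := by
          refine mul_le_mul' (eV_rpow_le_one k hα) (ENNReal.tsum_le_tsum fun m => ?_)
          exact mul_le_mul' (eV_rpow_le_one m hβ) le_rfl
    _ = ∑' m, a m * b (k - m) := by simp
    _ ≤ SA ^ ((1:ℝ)/2) * SB ^ ((1:ℝ)/2) := cs_shift' a b k
  have hck_top : ∀ k, c k ≠ ⊤ := by
    intro k
    refine ne_top_of_le_ne_top ?_ (hck k)
    exact ENNReal.mul_ne_top (ENNReal.rpow_ne_top_of_nonneg (by norm_num) ha)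
      (ENNReal.rpow_ne_top_of_nonneg (by norm_num) hb)
  -- partial sums
  have key : ∀ F : Finset ℤ, (∑ k ∈ F, (c k)^2)
      ≤ 9 * Z * SA * SB := by
    intro F
    set d : ℤ → ℝ≥0∞ := fun k => if k ∈ F then c k else 0 with hd
    have hEF : ∑' k, (d k)^2 = ∑ k ∈ F, (c k)^2 := by
      rw [tsum_eq_sum (s := F) (fun k hk => by simp [hd, hk])]
      exact Finset.sum_congr rfl fun k hk => by simp [hd, hk]
    have hdc : ∑' k, d k * c k = ∑ k ∈ F, (c k)^2 := by
      rw [tsum_eq_sum (s := F) (fun k hk => by simp [hd, hk])]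
      exact Finset.sum_congr rfl fun k hk => by simp [hd, hk, sq]
    set EF := ∑ k ∈ F, (c k)^2 with hEF'
    have hEF_top : EF ≠ ⊤ := by
      refine (ENNReal.sum_lt_top.mpr fun k _ => ?_).ne
      exact (pow_ne_top (hck_top k)).lt_top
    have tri := trilinear α β hα hβ d a b
    have lhs_eq : (∑' k, ∑' m, d k * (eV k ^ (-α) * eV m ^ (-β) * (a m * b (k - m)))) = EF := by
      rw [← hdc]
      refine tsum_congr fun k => ?_
      rw [ENNReal.tsum_mul_left]
      congr 1
      show _ = eV k ^ (-α) * ∑' (m : ℤ), eV m ^ (-β) * (a m * b (k - m))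
      rw [← ENNReal.tsum_mul_left]
      exact tsum_congr fun m => by ring
    rw [lhs_eq, hEF, ← hZ, ← hSA, ← hSB] at tri
    -- from EF ≤ 3 RZ REF RA RB conclude EF ≤ 9 Z SA SB
    by_cases hEF0 : EF = 0
    · simp [hEF0]
    · have h1 : EF = EF ^ ((1:ℝ)/2) * EF ^ ((1:ℝ)/2) := by
        rw [← ENNReal.rpow_add_of_nonneg _ _ (by norm_num) (by norm_num)]
        norm_num
      nth_rewrite 1 [h1] at tri
      have h2 : EF ^ ((1:ℝ)/2) ≤ 3 * Z ^ ((1:ℝ)/2) * SA ^ ((1:ℝ)/2) * SB ^ ((1:ℝ)/2) := by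
        have hne0 : EF ^ ((1:ℝ)/2) ≠ 0 := by
          simp [ENNReal.rpow_eq_zero_iff, hEF0, hEF_top]
        have hnetop : EF ^ ((1:ℝ)/2) ≠ ⊤ := ENNReal.rpow_ne_top_of_nonneg (by norm_num) hEF_top
        have h3 : EF ^ ((1:ℝ)/2) * EF ^ ((1:ℝ)/2)
            ≤ (3 * Z ^ ((1:ℝ)/2) * SA ^ ((1:ℝ)/2) * SB ^ ((1:ℝ)/2)) * EF ^ ((1:ℝ)/2) := by
          refine tri.trans (le_of_eq ?_)
          ring
        exact (ENNReal.mul_le_mul_iff_left hne0 hnetop).mp h3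
      calc EF = EF ^ ((1:ℝ)/2) * EF ^ ((1:ℝ)/2) := h1
      _ ≤ (3 * Z ^ ((1:ℝ)/2) * SA ^ ((1:ℝ)/2) * SB ^ ((1:ℝ)/2))
            * (3 * Z ^ ((1:ℝ)/2) * SA ^ ((1:ℝ)/2) * SB ^ ((1:ℝ)/2)) := mul_le_mul' h2 h2
      _ = 9 * (Z ^ ((1:ℝ)/2) * Z ^ ((1:ℝ)/2)) * (SA ^ ((1:ℝ)/2) * SA ^ ((1:ℝ)/2))
            * (SB ^ ((1:ℝ)/2) * SB ^ ((1:ℝ)/2)) := by ring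
      _ = 9 * Z * SA * SB := by
            rw [← ENNReal.rpow_add_of_nonneg _ _ (by norm_num) (by norm_num),
              ← ENNReal.rpow_add_of_nonneg _ _ (by norm_num) (by norm_num),
              ← ENNReal.rpow_add_of_nonneg _ _ (by norm_num) (by norm_num)]
            norm_num
  rw [ENNReal.tsum_eq_iSup_sum]
  exact iSup_le key


lemma real_summable_weight {σ : ℝ} (hσ : 1/2 < σ) :
    Summable (fun k : ℤ => (1 + (k:ℝ)^2) ^ (-σ)) := by
  have hnat : Summable (fun n : ℕ => (1 + (n:ℝ)^2) ^ (-σ)) := by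
    rw [← summable_nat_add_iff 1]
    have hbase : Summable (fun n : ℕ => ((n+1 : ℝ)) ^ (-(2*σ))) := by
      have := (Real.summable_nat_rpow (p := -(2*σ))).2 (by linarith)
      rw [← summable_nat_add_iff 1] at this
      simpa using this
    refine hbase.of_nonneg_of_le (fun n => Real.rpow_nonneg (by positivity) _) fun n => ?_
    have h1 : ((n+1:ℝ)) ^ (-(2*σ)) = (((n+1:ℝ))^2) ^ (-σ) := by
      rw [← Real.rpow_natCast ((n+1:ℝ)) 2, ← Real.rpow_mul (by positivity)]
      norm_num
    rw [h1]
    apply Real.rpow_le_rpow_of_nonpos (by positivity) (by push_cast; nlinarith [sq_nonneg ((n:ℝ))])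
      (by linarith)
  have : Summable (fun n : ℕ => (1 + ((n:ℤ):ℝ)^2) ^ (-σ)) := by push_cast; exact hnat
  refine Summable.of_nat_of_neg this ?_
  simpa using this


lemma summable_of_ofReal {u : ℤ → ℝ} (h0 : ∀ i, 0 ≤ u i)
    (h : (∑' i, ENNReal.ofReal (u i)) ≠ ⊤) : Summable u := by
  have h1 : (∑' i, ((u i).toNNReal : ℝ≥0∞)) ≠ ⊤ := by
    convert h using 2
    rfl
  have h2 := ENNReal.tsum_coe_ne_top_iff_summable.1 h1
  have h3 := NNReal.summable_coe.2 h2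
  refine h3.congr fun i => ?_
  simp [Real.coe_toNNReal _ (h0 i)]

lemma tsum_eq_toReal {u : ℤ → ℝ} (h0 : ∀ i, 0 ≤ u i) (hs : Summable u) :
    (∑' i, u i) = (∑' i, ENNReal.ofReal (u i)).toReal := by
  rw [← ENNReal.ofReal_tsum_of_nonneg h0 hs, ENNReal.toReal_ofReal (tsum_nonneg fun i => h0 i)]


variable {T : ℝ} [hT : Fact (0 < T)]

lemma fourierCoeff_congr_ae' {f g : AddCircle T → ℂ} (h : f =ᵐ[haarAddCircle] g) (n : ℤ) :
    fourierCoeff f n = fourierCoeff g n := by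
  unfold fourierCoeff
  refine integral_congr_ae ?_
  filter_upwards [h] with x hx
  rw [hx]

lemma norm_fourier_apply (n : ℤ) (x : AddCircle T) : ‖fourier n x‖ = 1 := Circle.norm_coe _

lemma memℒp_conj {f : AddCircle T → ℂ} (hf : MemLp f 2 haarAddCircle) :
    MemLp (fun x => conj (f x)) 2 haarAddCircle := by
  refine MemLp.of_le hf (RCLike.continuous_conj.comp_aestronglyMeasurable hf.1) ?_
  filter_upwards with x
  simp

lemma memℒp_fourier_mul {g : AddCircle T → ℂ} (hg : MemLp g 2 haarAddCircle) (k : ℤ) :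
    MemLp (fun x => fourier (-k) x * g x) 2 haarAddCircle := by
  refine MemLp.of_le hg (((fourier (-k)).continuous.aestronglyMeasurable).mul hg.1) ?_
  filter_upwards with x
  rw [norm_mul, norm_fourier_apply, one_mul]

lemma fourierCoeff_conj {f : AddCircle T → ℂ} (i : ℤ) :
    fourierCoeff (fun x => conj (f x)) i = conj (fourierCoeff f (-i)) := by
  unfold fourierCoeff
  rw [← integral_conj]
  refine integral_congr_ae (Filter.Eventually.of_forall fun x => ?_)
  show fourier (-i) x • conj (f x) = conj (fourier (- -i) x • f x)
  rw [smul_eq_mul, smul_eq_mul, map_mul]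
  congr 1
  rw [neg_neg, fourier_neg]

lemma fourierCoeff_fourier_mul {g : AddCircle T → ℂ} (k i : ℤ) :
    fourierCoeff (fun x => fourier (-k) x * g x) i = fourierCoeff g (i + k) := by
  unfold fourierCoeff
  refine integral_congr_ae (Filter.Eventually.of_forall fun x => ?_)
  show fourier (-i) x • (fourier (-k) x * g x) = fourier (-(i+k)) x • g x
  rw [smul_eq_mul, smul_eq_mul, ← mul_assoc, ← fourier_add, neg_add]

lemma summable_sq_fourierCoeff {f : AddCircle T → ℂ} (hf : MemLp f 2 haarAddCircle) :
    Summable (fun m : ℤ => ‖fourierCoeff f m‖ ^ 2) := by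
  have hmem := lp.memℓp (fourierBasis.repr (hf.toLp f))
  rw [memℓp_gen_iff (by norm_num)] at hmem
  have : ∀ m : ℤ, ‖fourierBasis.repr (hf.toLp f) m‖ ^ ((2:ℝ≥0∞).toReal) = ‖fourierCoeff f m‖ ^ 2 := by
    intro m
    rw [fourierBasis_repr, fourierCoeff_congr_ae' hf.coeFn_toLp]
    norm_num
  rwa [funext this] at hmem

/-- Convolution identity for Fourier coefficients of a product of two `L²` functions. -/
lemma fourierCoeff_mul {f g : AddCircle T → ℂ} (hf : MemLp f 2 haarAddCircle)
    (hg : MemLp g 2 haarAddCircle) (k : ℤ) :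
    fourierCoeff (fun x => f x * g x) k = ∑' m, fourierCoeff f m * fourierCoeff g (k - m) := by
  set F : AddCircle T → ℂ := fun x => conj (f x) with hF
  set G : AddCircle T → ℂ := fun x => fourier (-k) x * g x with hG
  have hFm := memℒp_conj hf
  have hGm := memℒp_fourier_mul hg k
  set u := hFm.toLp F
  set v := hGm.toLp G
  have hA : inner (𝕜 := ℂ) u v = fourierCoeff (fun x => f x * g x) k := by
    rw [MeasureTheory.L2.inner_def]
    unfold fourierCoeff
    refine integral_congr_ae ?_
    filter_upwards [hFm.coeFn_toLp, hGm.coeFn_toLp] with x hxF hxG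
    rw [hxF, hxG, RCLike.inner_apply, Complex.conj_conj, smul_eq_mul]
    ring
  have hB : inner (𝕜 := ℂ) u v = ∑' i, fourierCoeff f (-i) * fourierCoeff g (i + k) := by
    rw [← fourierBasis.tsum_inner_mul_inner u v]
    refine tsum_congr fun i => ?_
    have h1 : inner (𝕜 := ℂ) (fourierBasis (T := T) i) v = fourierCoeff g (i + k) := by
      rw [← fourierBasis.repr_apply_apply, fourierBasis_repr,
        fourierCoeff_congr_ae' hGm.coeFn_toLp]
      exact fourierCoeff_fourier_mul k i
    have h2 : inner (𝕜 := ℂ) u (fourierBasis (T := T) i) = fourierCoeff f (-i) := by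
      rw [← inner_conj_symm, ← fourierBasis.repr_apply_apply, fourierBasis_repr,
        fourierCoeff_congr_ae' hFm.coeFn_toLp, fourierCoeff_conj, Complex.conj_conj]
    rw [h1, h2]
  rw [← hA, hB]
  have := (Equiv.neg ℤ).tsum_eq (fun i => fourierCoeff f (-i) * fourierCoeff g (i + k))
  rw [← this]
  refine tsum_congr fun m => ?_
  simp only [Equiv.neg_apply, neg_neg]
  congr 2
  omega


instance : Fact (0 < 2 * π) := ⟨by positivity⟩

/-- The squared Sobolev norm `‖u‖_σ² = Σ_{k∈ℤ} (1+k²)^σ |u_k|²` of a `2π`-periodic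
function, expressed via its Fourier coefficients. -/
noncomputable def sobFnNormSq (σ : ℝ) (u : AddCircle (2 * π) → ℂ) : ℝ :=
  ∑' k : ℤ, (1 + (k : ℝ) ^ 2) ^ σ * ‖fourierCoeff u k‖ ^ 2

/-- Dual Sobolev product estimate `‖fg‖_{-s} ≲ ‖f‖_r ‖g‖_{-t}`. -/
theorem stmt_1 (r s t : ℝ) (hr : 0 ≤ r) (hs : 0 ≤ s) (ht : 0 ≤ t)
    (hmin : t < min r s) (hsum : 1 / 2 + t < r + s) :
    ∃ C > 0, ∀ f g : AddCircle (2 * π) → ℂ,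
      MemLp f 2 haarAddCircle →
      Summable (fun k : ℤ => (1 + (k : ℝ) ^ 2) ^ r * ‖fourierCoeff f k‖ ^ 2) →
      MemLp g 2 haarAddCircle →
      Summable (fun k : ℤ =>
        (1 + (k : ℝ) ^ 2) ^ (-s) * ‖fourierCoeff (fun x => f x * g x) k‖ ^ 2) ∧
      Real.sqrt (sobFnNormSq (-s) (fun x => f x * g x)) ≤
        C * Real.sqrt (sobFnNormSq r f) * Real.sqrt (sobFnNormSq (-t) g) := by
  have hts : t < s := lt_of_lt_of_le hmin (min_le_right r s)
  have htr : t < r := lt_of_lt_of_le hmin (min_le_left r s)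
  set σ := r + s - t with hσdef
  have hσ : 1/2 < σ := by rw [hσdef]; linarith
  set Ze : ℝ≥0∞ := ∑' j : ℤ, eV j ^ (-σ) with hZe
  have hZe_eq : Ze = ENNReal.ofReal (∑' j : ℤ, (1 + (j:ℝ)^2) ^ (-σ)) := by
    rw [hZe, ENNReal.ofReal_tsum_of_nonneg (fun j => Real.rpow_nonneg (by positivity) _)
      (real_summable_weight hσ)]
    exact tsum_congr fun j => by rw [eV, ENNReal.ofReal_rpow_of_pos (by positivity)]
  have hZe_top : Ze ≠ ⊤ := by rw [hZe_eq]; exact ENNReal.ofReal_ne_top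
  have hZe_0 : Ze ≠ 0 := by
    rw [hZe]; intro h; rw [ENNReal.tsum_eq_zero] at h; exact eV_rpow_ne_zero 0 _ (h 0)
  set Ce : ℝ≥0∞ := (2:ℝ≥0∞)^(2*t) * 72 * Ze with hCe
  have h2t_top : (2:ℝ≥0∞)^(2*t) ≠ ⊤ :=
    ENNReal.rpow_ne_top_of_nonneg (by linarith) (by norm_num)
  have h2t_0 : (2:ℝ≥0∞)^(2*t) ≠ 0 := by
    simp [ENNReal.rpow_eq_zero_iff]
  have hCe_top : Ce ≠ ⊤ := ENNReal.mul_ne_top (ENNReal.mul_ne_top h2t_top (by norm_num)) hZe_top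
  have hCe_0 : Ce ≠ 0 := mul_ne_zero (mul_ne_zero h2t_0 (by norm_num)) hZe_0
  refine ⟨Real.sqrt Ce.toReal, Real.sqrt_pos.mpr (ENNReal.toReal_pos hCe_0 hCe_top),
    fun f g hf hsf hg => ?_⟩
  have hF2 := summable_sq_fourierCoeff hf
  have hG2 := summable_sq_fourierCoeff hg
  set Af : ℤ → ℝ≥0∞ := fun m => ENNReal.ofReal ‖fourierCoeff f m‖ with hAf
  set Bg : ℤ → ℝ≥0∞ := fun m => ENNReal.ofReal ‖fourierCoeff g m‖ with hBg
  set af : ℤ → ℝ≥0∞ := fun m => eV m ^ (r/2) * Af m with haf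
  set bg : ℤ → ℝ≥0∞ := fun m => eV m ^ (-(t/2)) * Bg m with hbg
  have hAf_eq : ∀ m, Af m = eV m ^ (-(r/2)) * af m := by
    intro m
    rw [haf, ← mul_assoc, ← eV_rpow_add, show -(r/2)+r/2 = 0 by ring, ENNReal.rpow_zero, one_mul]
  have hBg_eq : ∀ j, Bg j = eV j ^ (t/2) * bg j := by
    intro j
    rw [hbg, ← mul_assoc, ← eV_rpow_add, show t/2 + -(t/2) = 0 by ring,
      ENNReal.rpow_zero, one_mul]
  -- summability of products of coefficient norms
  have hprod : ∀ k : ℤ, Summable (fun m : ℤ => ‖fourierCoeff f m‖ * ‖fourierCoeff g (k - m)‖) := by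
    intro k
    have hg' : Summable (fun m : ℤ => ‖fourierCoeff g (k - m)‖^2) := by
      have := hG2.comp_injective (Equiv.subLeft k).injective
      exact this
    refine Summable.of_nonneg_of_le (fun m => by positivity) (fun m => ?_) (hF2.add hg')
    nlinarith [sq_nonneg (‖fourierCoeff f m‖ - ‖fourierCoeff g (k-m)‖)]
  have hprod' : ∀ k : ℤ, Summable (fun m : ℤ => ‖fourierCoeff f m * fourierCoeff g (k - m)‖) :=
    fun k => ((hprod k).congr (fun m => (norm_mul _ _).symm))
  have hDk : ∀ k, ENNReal.ofReal ‖fourierCoeff (fun x => f x * g x) k‖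
      ≤ ∑' m, Af m * Bg (k - m) := by
    intro k
    rw [fourierCoeff_mul hf hg k]
    calc ENNReal.ofReal ‖∑' m, fourierCoeff f m * fourierCoeff g (k - m)‖
        ≤ ENNReal.ofReal (∑' m, ‖fourierCoeff f m‖ * ‖fourierCoeff g (k - m)‖) := by
          refine ENNReal.ofReal_le_ofReal ?_
          refine (norm_tsum_le_tsum_norm (hprod' k)).trans (le_of_eq ?_)
          exact tsum_congr fun m => norm_mul _ _
    _ = ∑' m, Af m * Bg (k - m) := by
          rw [ENNReal.ofReal_tsum_of_nonneg (fun m => by positivity) (hprod k)]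
          exact tsum_congr fun m => ENNReal.ofReal_mul (norm_nonneg _)
  set SA := ∑' m, (af m)^2 with hSA
  set SB := ∑' m, (bg m)^2 with hSB
  have hsobf_term : ∀ m : ℤ, (af m)^2
      = ENNReal.ofReal ((1 + (m:ℝ)^2) ^ r * ‖fourierCoeff f m‖^2) := by
    intro m
    rw [haf, mul_pow, rpow_sq, show 2*(r/2) = r by ring,
      ENNReal.ofReal_mul (Real.rpow_nonneg (by positivity) _),
      ← ENNReal.ofReal_pow (norm_nonneg _), eV,
      ENNReal.ofReal_rpow_of_pos (by positivity)]
  have hsobg_term : ∀ m : ℤ, (bg m)^2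
      = ENNReal.ofReal ((1 + (m:ℝ)^2) ^ (-t) * ‖fourierCoeff g m‖^2) := by
    intro m
    rw [hbg, mul_pow, rpow_sq, show 2*(-(t/2)) = -t by ring,
      ENNReal.ofReal_mul (Real.rpow_nonneg (by positivity) _),
      ← ENNReal.ofReal_pow (norm_nonneg _), eV,
      ENNReal.ofReal_rpow_of_pos (by positivity)]
  have hsg : Summable (fun k : ℤ => (1 + (k:ℝ)^2) ^ (-t) * ‖fourierCoeff g k‖^2) := by
    refine Summable.of_nonneg_of_le (fun k => by positivity) (fun k => ?_) hG2
    refine mul_le_of_le_one_left (by positivity) ?_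
    exact Real.rpow_le_one_of_one_le_of_nonpos (by nlinarith [sq_nonneg ((k:ℝ))]) (by linarith)
  have hSA_eq : SA = ENNReal.ofReal (sobFnNormSq r f) := by
    rw [hSA, sobFnNormSq, ENNReal.ofReal_tsum_of_nonneg (fun k => by positivity) hsf]
    exact tsum_congr hsobf_term
  have hSB_eq : SB = ENNReal.ofReal (sobFnNormSq (-t) g) := by
    rw [hSB, sobFnNormSq, ENNReal.ofReal_tsum_of_nonneg (fun k => by positivity) hsg]
    exact tsum_congr hsobg_term
  have hSA_top : SA ≠ ⊤ := by rw [hSA_eq]; exact ENNReal.ofReal_ne_top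
  have hSB_top : SB ≠ ⊤ := by rw [hSB_eq]; exact ENNReal.ofReal_ne_top
  set X1 : ℤ → ℝ≥0∞ :=
    fun k => eV k ^ (-((s-t)/2)) * ∑' m, eV m ^ (-(r/2)) * (af m * bg (k - m)) with hX1
  set X2 : ℤ → ℝ≥0∞ :=
    fun k => eV k ^ (-(s/2)) * ∑' m, eV m ^ (-((r-t)/2)) * (af m * bg (k - m)) with hX2
  have hterm : ∀ k m : ℤ, eV k ^ (-(s/2)) * (Af m * Bg (k - m))
      ≤ (2:ℝ≥0∞)^t * (eV k ^ (-((s-t)/2)) * (eV m ^ (-(r/2)) * (af m * bg (k - m)))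
          + eV k ^ (-(s/2)) * (eV m ^ (-((r-t)/2)) * (af m * bg (k - m)))) := by
    intro k m
    rw [hAf_eq m, hBg_eq (k - m)]
    have hpe : eV (k - m) ^ (t/2) ≤ (2:ℝ≥0∞)^t * (eV k ^ (t/2) + eV m ^ (t/2)) := by
      have := eV_sub_rpow_le k m (c := t/2) (by linarith)
      rwa [show 2*(t/2) = t by ring] at this
    calc eV k ^ (-(s/2)) * ((eV m ^ (-(r/2)) * af m) * ((eV (k-m) ^ (t/2)) * bg (k - m)))
        ≤ eV k ^ (-(s/2)) * ((eV m ^ (-(r/2)) * af m)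
            * (((2:ℝ≥0∞)^t * (eV k ^ (t/2) + eV m ^ (t/2))) * bg (k - m))) := by
          exact mul_le_mul' le_rfl (mul_le_mul' le_rfl (mul_le_mul' hpe le_rfl))
    _ = (2:ℝ≥0∞)^t * ((eV k ^ (-(s/2)) * eV k ^ (t/2)) * (eV m ^ (-(r/2)) * (af m * bg (k-m)))
          + eV k ^ (-(s/2)) * ((eV m ^ (-(r/2)) * eV m ^ (t/2)) * (af m * bg (k-m)))) := by
          ring
    _ = _ := by
          rw [← eV_rpow_add, ← eV_rpow_add, show -(s/2) + t/2 = -((s-t)/2) by ring,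
            show -(r/2) + t/2 = -((r-t)/2) by ring]
  have hXk : ∀ k, eV k ^ (-(s/2)) * (∑' m, Af m * Bg (k - m))
      ≤ (2:ℝ≥0∞)^t * (X1 k + X2 k) := by
    intro k
    rw [← ENNReal.tsum_mul_left]
    calc ∑' m, eV k ^ (-(s/2)) * (Af m * Bg (k - m))
        ≤ ∑' m, (2:ℝ≥0∞)^t * (eV k ^ (-((s-t)/2)) * (eV m ^ (-(r/2)) * (af m * bg (k - m)))
            + eV k ^ (-(s/2)) * (eV m ^ (-((r-t)/2)) * (af m * bg (k - m)))) :=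
          ENNReal.tsum_le_tsum (hterm k)
    _ = (2:ℝ≥0∞)^t * (X1 k + X2 k) := by
          rw [ENNReal.tsum_mul_left]
          congr 1
          rw [ENNReal.tsum_add, ENNReal.tsum_mul_left, ENNReal.tsum_mul_left]
  have hcore1 : ∑' k, (X1 k)^2 ≤ 9 * Ze * SA * SB := by
    have h := core_bilinear ((s-t)/2) (r/2) (by linarith) (by linarith) af bg hSA_top hSB_top
    rwa [show (2*((s-t)/2 + r/2)) = σ by rw [hσdef]; ring] at h
  have hcore2 : ∑' k, (X2 k)^2 ≤ 9 * Ze * SA * SB := by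
    have h := core_bilinear (s/2) ((r-t)/2) (by linarith) (by linarith) af bg hSA_top hSB_top
    rwa [show (2*(s/2 + (r-t)/2)) = σ by rw [hσdef]; ring] at h
  have main : (∑' k, eV k ^ (-s)
      * (ENNReal.ofReal ‖fourierCoeff (fun x => f x * g x) k‖)^2) ≤ Ce * SA * SB := by
    have hper : ∀ k, eV k ^ (-s) * (ENNReal.ofReal ‖fourierCoeff (fun x => f x * g x) k‖)^2
        ≤ (2:ℝ≥0∞)^(2*t) * 4 * ((X1 k)^2 + (X2 k)^2) := by
      intro k
      have e1 : eV k ^ (-s) * (ENNReal.ofReal ‖fourierCoeff (fun x => f x * g x) k‖)^2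
          = (eV k ^ (-(s/2)) * ENNReal.ofReal ‖fourierCoeff (fun x => f x * g x) k‖)^2 := by
        rw [mul_pow, rpow_sq, show 2 * -(s/2) = -s by ring]
      rw [e1]
      calc (eV k ^ (-(s/2)) * ENNReal.ofReal ‖fourierCoeff (fun x => f x * g x) k‖)^2
          ≤ (eV k ^ (-(s/2)) * ∑' m, Af m * Bg (k - m))^2 := by
            gcongr
            exact hDk k
      _ ≤ ((2:ℝ≥0∞)^t * (X1 k + X2 k))^2 := pow_le_pow_left₀ zero_le (hXk k) 2
      _ = ((2:ℝ≥0∞)^t)^2 * (X1 k + X2 k)^2 := mul_pow _ _ 2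
      _ ≤ (2:ℝ≥0∞)^(2*t) * (4 * ((X1 k)^2 + (X2 k)^2)) := by
            rw [rpow_sq]
            exact mul_le_mul' le_rfl (sq_add_le _ _)
      _ = (2:ℝ≥0∞)^(2*t) * 4 * ((X1 k)^2 + (X2 k)^2) := by ring
    calc (∑' k, eV k ^ (-s) * (ENNReal.ofReal ‖fourierCoeff (fun x => f x * g x) k‖)^2)
        ≤ ∑' k, (2:ℝ≥0∞)^(2*t) * 4 * ((X1 k)^2 + (X2 k)^2) := ENNReal.tsum_le_tsum hper
    _ = (2:ℝ≥0∞)^(2*t) * 4 * ((∑' k, (X1 k)^2) + (∑' k, (X2 k)^2)) := by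
          rw [ENNReal.tsum_mul_left, ENNReal.tsum_add]
    _ ≤ (2:ℝ≥0∞)^(2*t) * 4 * ((9 * Ze * SA * SB) + (9 * Ze * SA * SB)) :=
          mul_le_mul' le_rfl (add_le_add hcore1 hcore2)
    _ = Ce * SA * SB := by rw [hCe]; ring
  have hofReal : ∀ k : ℤ, ENNReal.ofReal
      ((1 + (k:ℝ)^2)^(-s) * ‖fourierCoeff (fun x => f x * g x) k‖^2)
      = eV k ^ (-s) * (ENNReal.ofReal ‖fourierCoeff (fun x => f x * g x) k‖)^2 := by
    intro k
    rw [ENNReal.ofReal_mul (Real.rpow_nonneg (by positivity) _),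
      ← ENNReal.ofReal_pow (norm_nonneg _), eV, ENNReal.ofReal_rpow_of_pos (by positivity)]
  have hbound : (∑' k : ℤ, ENNReal.ofReal
      ((1 + (k:ℝ)^2)^(-s) * ‖fourierCoeff (fun x => f x * g x) k‖^2)) ≤ Ce * SA * SB := by
    calc _ = (∑' k, eV k ^ (-s)
        * (ENNReal.ofReal ‖fourierCoeff (fun x => f x * g x) k‖)^2) := tsum_congr hofReal
    _ ≤ Ce * SA * SB := main
  have hCSS_top : Ce * SA * SB ≠ ⊤ :=
    ENNReal.mul_ne_top (ENNReal.mul_ne_top hCe_top hSA_top) hSB_top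
  have hsum_fg : Summable (fun k : ℤ =>
      (1 + (k:ℝ)^2)^(-s) * ‖fourierCoeff (fun x => f x * g x) k‖^2) := by
    refine summable_of_ofReal (fun k => by positivity) ?_
    exact ne_top_of_le_ne_top hCSS_top hbound
  refine ⟨hsum_fg, ?_⟩
  have h0f : 0 ≤ sobFnNormSq r f := tsum_nonneg fun k => by positivity
  have h0g : 0 ≤ sobFnNormSq (-t) g := tsum_nonneg fun k => by positivity
  have hreal : sobFnNormSq (-s) (fun x => f x * g x)
      ≤ Ce.toReal * (sobFnNormSq r f * sobFnNormSq (-t) g) := by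
    rw [sobFnNormSq, tsum_eq_toReal (fun k => by positivity) hsum_fg]
    calc (∑' k : ℤ, ENNReal.ofReal
        ((1 + (k:ℝ)^2)^(-s) * ‖fourierCoeff (fun x => f x * g x) k‖^2)).toReal
        ≤ (Ce * SA * SB).toReal := ENNReal.toReal_mono hCSS_top hbound
    _ = Ce.toReal * (SA.toReal * SB.toReal) := by
          rw [ENNReal.toReal_mul, ENNReal.toReal_mul]; ring
    _ = Ce.toReal * (sobFnNormSq r f * sobFnNormSq (-t) g) := by
          rw [hSA_eq, hSB_eq, ENNReal.toReal_ofReal h0f, ENNReal.toReal_ofReal h0g]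
  calc Real.sqrt (sobFnNormSq (-s) (fun x => f x * g x))
      ≤ Real.sqrt (Ce.toReal * (sobFnNormSq r f * sobFnNormSq (-t) g)) :=
        Real.sqrt_le_sqrt hreal
  _ = Real.sqrt Ce.toReal * (Real.sqrt (sobFnNormSq r f) * Real.sqrt (sobFnNormSq (-t) g)) := by
        rw [Real.sqrt_mul ENNReal.toReal_nonneg, Real.sqrt_mul h0f]
  _ = Real.sqrt Ce.toReal * Real.sqrt (sobFnNormSq r f) * Real.sqrt (sobFnNormSq (-t) g) := by
        ring
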